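/- Let T be a continuous rank-r tensor with the dominant property on an n-dimensional Lorentzian vector space, and suppose T(k,…,k) = 0 for some future-pointing causal vector k with T not identically zero. Then k must be null (g(k,k) = 0). -/

import Mathlib

open scoped BigOperators

noncomputable section

/-- Minkowski metric on `Fin n → ℝ`, mostly-plus signature (1, n-1). -/
def mink (n : ℕ) [NeZero n] (u v : Fin n → ℝ) : ℝ :=
  ∑ i : Fin n, (if i = 0 then (-1 : ℝ) else 1) * u i * v i

/-- Future-pointing causal vector: nonpositive norm, in the closed future half-cone. -/
def FutureCausal (n : ℕ) [NeZero n] (u : Fin n → ℝ) : Prop :=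
  mink n u u ≤ 0 ∧ 0 ≤ u 0

/-- The dominant property for rank-`r` covariant tensors. -/
def DP (n r : ℕ) [NeZero n] (T : MultilinearMap ℝ (fun _ : Fin r => (Fin n → ℝ)) ℝ) : Prop :=
  ∀ u : Fin r → (Fin n → ℝ), (∀ i, FutureCausal n (u i)) → 0 ≤ T u

lemma mink_expand (n : ℕ) [NeZero n] (k v : Fin n → ℝ) (t : ℝ) :
    mink n (k + t • v) (k + t • v)
      = mink n k k + 2*t * mink n k v + t^2 * mink n v v := by
  simp only [mink, Finset.mul_sum, ← Finset.sum_add_distrib]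
  refine Finset.sum_congr rfl fun i _ => ?_
  simp only [Pi.add_apply, Pi.smul_apply, smul_eq_mul]
  ring

lemma mink_single (n : ℕ) [NeZero n] (v : Fin n → ℝ) :
    mink n v (Pi.single 0 1) = -(v 0) := by
  rw [mink, Finset.sum_eq_single 0]
  · simp
  · intro i _ hi; simp [Pi.single_apply, hi]
  · simp

lemma mink_single_self (n : ℕ) [NeZero n] :
    mink n (Pi.single 0 1) (Pi.single 0 1) = -1 := by
  have := mink_single n (Pi.single (0 : Fin n) (1:ℝ))
  simpa using this

lemma futureCausal_single (n : ℕ) [NeZero n] :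
    FutureCausal n (Pi.single 0 1) := by
  constructor
  · rw [mink_single_self]; norm_num
  · simp

lemma mink_self_lower (n : ℕ) [NeZero n] (k : Fin n → ℝ) :
    -(k 0)^2 ≤ mink n k k := by
  rw [mink, ← Finset.add_sum_erase _ _ (Finset.mem_univ 0)]
  have h : (0:ℝ) ≤ ∑ i ∈ Finset.univ.erase 0, (if i = 0 then (-1:ℝ) else 1) * k i * k i := by
    refine Finset.sum_nonneg fun i hi => ?_
    have : i ≠ 0 := Finset.ne_of_mem_erase hi
    simp [this, mul_self_nonneg]
  rw [if_pos rfl]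
  nlinarith [h]

lemma k0_pos (n : ℕ) [NeZero n] (k : Fin n → ℝ) (hk : FutureCausal n k)
    (hlt : mink n k k < 0) : 0 < k 0 := by
  rcases hk with ⟨-, h2⟩
  rcases h2.lt_or_eq with h | h
  · exact h
  · exfalso; have := mink_self_lower n k; rw [← h] at this; nlinarith

lemma exists_eps (n : ℕ) [NeZero n] (k v : Fin n → ℝ) (hk : FutureCausal n k)
    (hlt : mink n k k < 0) (hv : FutureCausal n v) :
    ∃ ε : ℝ, 0 < ε ∧ FutureCausal n (k + ε • v) ∧ FutureCausal n (k + (-ε) • v) := by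
  have hk0 : 0 < k 0 := k0_pos n k hk hlt
  obtain ⟨hc0, hv0⟩ := hv
  set a := mink n k k with ha
  set b := mink n k v with hb
  set c := mink n v v with hc
  have hD1 : (0:ℝ) < 2*|b|+|c|+1 := by positivity
  have hV1 : (0:ℝ) < |v 0|+1 := by positivity
  set ε := min (min 1 ((-a)/(2*|b|+|c|+1))) (k 0/(|v 0|+1)) with hε
  have hε1 : ε ≤ 1 := le_trans (min_le_left _ _) (min_le_left _ _)
  have hε2 : ε ≤ (-a)/(2*|b|+|c|+1) := le_trans (min_le_left _ _) (min_le_right _ _)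
  have hε3 : ε ≤ k 0/(|v 0|+1) := min_le_right _ _
  have hεpos : 0 < ε := by
    refine lt_min (lt_min one_pos ?_) (by positivity)
    exact div_pos (by linarith) hD1
  have hεD : ε * (2*|b|+|c|+1) ≤ -a := (le_div_iff₀ hD1).mp hε2
  have hεv : ε * (|v 0|+1) ≤ k 0 := (le_div_iff₀ hV1).mp hε3
  have key : ∀ t : ℝ, |t| ≤ ε → FutureCausal n (k + t • v) := by
    intro t htε
    have habs1 : t * b ≤ ε * |b| := by
      calc t * b ≤ |t * b| := le_abs_self _
      _ = |t| * |b| := abs_mul t b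
      _ ≤ ε * |b| := mul_le_mul_of_nonneg_right htε (abs_nonneg b)
    have habs2 : t^2 * c ≤ 0 := mul_nonpos_of_nonneg_of_nonpos (sq_nonneg t) hc0
    have habs3 : -(ε * |v 0|) ≤ t * v 0 := by
      have h1 : |t * v 0| ≤ ε * |v 0| := by
        rw [abs_mul]; exact mul_le_mul_of_nonneg_right htε (abs_nonneg (v 0))
      linarith [neg_abs_le (t * v 0)]
    constructor
    · rw [mink_expand, ← ha, ← hb, ← hc]
      nlinarith [abs_nonneg c, abs_nonneg b, hεpos.le]
    · simp only [Pi.add_apply, Pi.smul_apply, smul_eq_mul]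
      nlinarith [abs_nonneg (v 0), hεpos.le]
  exact ⟨ε, hεpos, key ε (by rw [abs_of_pos hεpos]), key (-ε) (by rw [abs_neg, abs_of_pos hεpos])⟩

/-- Any vector plus a large multiple of `e₀` is future causal. -/
lemma exists_causal_shift (n : ℕ) [NeZero n] (v : Fin n → ℝ) :
    ∃ C : ℝ, FutureCausal n (v + C • (Pi.single 0 1 : Fin n → ℝ)) := by
  refine ⟨2*|v 0| + |mink n v v| + 1, ?_, ?_⟩
  · rw [mink_expand, mink_single, mink_single_self]
    nlinarith [le_abs_self (mink n v v), le_abs_self (v 0), neg_abs_le (v 0),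
      abs_nonneg (v 0), abs_nonneg (mink n v v)]
  · simp only [Pi.add_apply, Pi.smul_apply, smul_eq_mul, Pi.single_eq_same, mul_one]
    nlinarith [le_abs_self (v 0), neg_abs_le (v 0), abs_nonneg (mink n v v)]

/-- If a nonzero tensor with the dominant property vanishes on the diagonal
tuple of a future-pointing causal vector `k`, then `k` is null. -/
theorem stmt_16 (n r : ℕ) [NeZero n]
    (T : MultilinearMap ℝ (fun _ : Fin r => (Fin n → ℝ)) ℝ)
    (hDP : DP n r T) (hT : T ≠ 0)
    (k : Fin n → ℝ) (hk : FutureCausal n k)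
    (h0 : T (fun _ => k) = 0) :
    mink n k k = 0 := by
  rcases hk.1.lt_or_eq with hlt | heq
  on_goal 2 => exact heq
  exfalso
  -- Step 1: T vanishes on all future-causal tuples.
  have L1 : ∀ m : ℕ, ∀ u : Fin r → (Fin n → ℝ), (∀ i, FutureCausal n (u i)) →
      (∀ i : Fin r, m ≤ (i : ℕ) → u i = k) → T u = 0 := by
    intro m
    induction m with
    | zero =>
      intro u _ hkc
      have : u = fun _ => k := funext fun i => hkc i (Nat.zero_le _)
      rw [this]; exact h0
    | succ m ih =>
      intro u hc hkc
      by_cases hm : m < r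
      · set i0 : Fin r := ⟨m, hm⟩ with hi0
        obtain ⟨ε, hεpos, hplus, hminus⟩ := exists_eps n k (u i0) hk hlt (hc i0)
        have hbase : T (Function.update u i0 k) = 0 := by
          refine ih _ (fun j => ?_) (fun j hj => ?_)
          · rcases eq_or_ne j i0 with h | h
            · rw [h, Function.update_self]; exact ⟨hlt.le, hk.2⟩
            · rw [Function.update_of_ne h]; exact hc j
          · rcases eq_or_ne j i0 with h | h
            · rw [h, Function.update_self]
            · rw [Function.update_of_ne h]
              refine hkc j ?_
              have : (j : ℕ) ≠ m := fun hjm => h (Fin.ext hjm)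
              omega
        have hlin : ∀ t : ℝ, T (Function.update u i0 (k + t • u i0)) = t * T u := by
          intro t
          rw [MultilinearMap.map_update_add, hbase, MultilinearMap.map_update_smul, smul_eq_mul,
            Function.update_eq_self, zero_add]
        have h1 : 0 ≤ ε * T u := by
          rw [← hlin ε]
          refine hDP _ fun j => ?_
          rcases eq_or_ne j i0 with h | h
          · rw [h, Function.update_self]; exact hplus
          · rw [Function.update_of_ne h]; exact hc j
        have h2 : 0 ≤ (-ε) * T u := by
          rw [← hlin (-ε)]
          refine hDP _ fun j => ?_
          rcases eq_or_ne j i0 with h | h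
          · rw [h, Function.update_self]; exact hminus
          · rw [Function.update_of_ne h]; exact hc j
        nlinarith [h1, h2, hεpos]
      · exact ih u hc (fun i hi => hkc i (by omega))
  -- Step 2: T vanishes on all tuples.
  have L2 : ∀ m : ℕ, ∀ u : Fin r → (Fin n → ℝ),
      (∀ i : Fin r, m ≤ (i : ℕ) → FutureCausal n (u i)) → T u = 0 := by
    intro m
    induction m with
    | zero =>
      intro u hc
      exact L1 r u (fun i => hc i (Nat.zero_le _)) (fun i hi => absurd hi (by omega))
    | succ m ih =>
      intro u hc
      by_cases hm : m < r
      · set i0 : Fin r := ⟨m, hm⟩ with hi0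
        obtain ⟨C, hw⟩ := exists_causal_shift n (u i0)
        have hcaus : ∀ (x : Fin n → ℝ), FutureCausal n x →
            T (Function.update u i0 x) = 0 := by
          intro x hx
          refine ih _ (fun j hj => ?_)
          rcases eq_or_ne j i0 with h | h
          · rw [h, Function.update_self]; exact hx
          · rw [Function.update_of_ne h]
            refine hc j ?_
            have : (j : ℕ) ≠ m := fun hjm => h (Fin.ext hjm)
            omega
        have key : T u = T (Function.update u i0 (u i0 + C • (Pi.single 0 1 : Fin n → ℝ)))
            - C * T (Function.update u i0 (Pi.single 0 1)) := by
          rw [MultilinearMap.map_update_add, MultilinearMap.map_update_smul, smul_eq_mul,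
            Function.update_eq_self]
          ring
        rw [key, hcaus _ hw, hcaus _ (futureCausal_single n)]
        ring
      · exact ih u (fun i hi => hc i (by omega))
  exact hT (MultilinearMap.ext fun u =>
    (L2 r u (fun i hi => absurd hi (by omega))).trans rfl)
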